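/- Let G be a finite simple graph on vertex set {1,…,n} such that 1,2,…,n is a perfect elimination ordering of G, let I = I(G^c), ordered by the lexicographic order induced by x_1 > … > x_n (an order of linear quotients), and let k ≥ 0. Then the ideal ( x_F·v : v ∈ G(I), F ⊆ set(v), |F| = k ) equals the ideal generated by all squarefree monomials x_{i_1} x_{i_2} ··· x_{i_{k+2}} with 1 ≤ i_1 < i_2 < … < i_{k+2} ≤ n for which there exists t < k+2 such that {i_t, i_ℓ} ∉ E(G) for all t < ℓ ≤ k+2. (The left-hand ideal is the k-th homological shift ideal HS_k(I(G^c)).) -/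
import Mathlib


open MvPolynomial

section Aux

variable {n : ℕ}

/-- indicator finsupp of a finset -/
noncomputable def eS (S : Finset (Fin n)) : Fin n →₀ ℕ := ∑ l ∈ S, Finsupp.single l 1

lemma eS_apply (S : Finset (Fin n)) (s : Fin n) : eS S s = if s ∈ S then 1 else 0 := by
  classical
  simp [eS, Finsupp.finset_sum_apply, Finsupp.single_apply]

lemma eS_le_iff {S T : Finset (Fin n)} : eS S ≤ eS T ↔ S ⊆ T := by
  constructor
  · intro h a ha
    have := Finsupp.le_def.mp h a
    rw [eS_apply, eS_apply, if_pos ha] at this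
    by_contra hc
    rw [if_neg hc] at this
    omega
  · intro h
    rw [Finsupp.le_def]
    intro s
    rw [eS_apply, eS_apply]
    by_cases hs : s ∈ S
    · rw [if_pos hs, if_pos (h hs)]
    · simp [hs]

lemma pair_eq {a b : Fin n} (hab : a ≠ b) :
    Finsupp.single a 1 + Finsupp.single b 1 = eS {a, b} := by
  rw [eS, Finset.sum_pair hab]

lemma triple_eq {l a b : Fin n} (hla : l ≠ a) (hlb : l ≠ b) (hab : a ≠ b) :
    Finsupp.single l 1 + (Finsupp.single a 1 + Finsupp.single b 1) = eS {l, a, b} := by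
  rw [eS, Finset.sum_insert (by simp [hla, hlb]), Finset.sum_pair hab]

lemma pair_le_three {a b l i j : Fin n}
    (h : Finsupp.single a 1 + Finsupp.single b 1 ≤
      Finsupp.single l 1 + (Finsupp.single i 1 + Finsupp.single j 1)) :
    (a = l ∨ a = i ∨ a = j) ∧ (b = l ∨ b = i ∨ b = j) := by
  constructor
  · by_contra hc
    push_neg at hc
    have h' := Finsupp.le_def.mp h a
    simp only [Finsupp.add_apply, Finsupp.single_apply,
      if_neg (show ¬ l = a from fun he => hc.1 he.symm),
      if_neg (show ¬ i = a from fun he => hc.2.1 he.symm),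
      if_neg (show ¬ j = a from fun he => hc.2.2 he.symm)] at h'
    split_ifs at h' <;> omega
  · by_contra hc
    push_neg at hc
    have h' := Finsupp.le_def.mp h b
    simp only [Finsupp.add_apply, Finsupp.single_apply,
      if_neg (show ¬ l = b from fun he => hc.1 he.symm),
      if_neg (show ¬ i = b from fun he => hc.2.1 he.symm),
      if_neg (show ¬ j = b from fun he => hc.2.2 he.symm)] at h'
    split_ifs at h' <;> omega

/-- characterization of membership in the colon ideal -/
lemma colon_char {K : Type*} [Field K] (G : SimpleGraph (Fin n)) (i j l : Fin n) :
    (MvPolynomial.X l : MvPolynomial (Fin n) K) ∈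
      Submodule.colon
        (Ideal.span {q : MvPolynomial (Fin n) K | ∃ a b : Fin n, a < b ∧ ¬ G.Adj a b ∧
          (a < i ∨ (a = i ∧ b < j)) ∧
          q = monomial (Finsupp.single a 1 + Finsupp.single b 1) 1})
        (Ideal.span {(monomial (Finsupp.single i 1 + Finsupp.single j 1) (1 : K))})
    ↔ ∃ a b : Fin n, a < b ∧ ¬ G.Adj a b ∧ (a < i ∨ (a = i ∧ b < j)) ∧
        Finsupp.single a 1 + Finsupp.single b 1 ≤
          Finsupp.single l 1 + (Finsupp.single i 1 + Finsupp.single j 1) := by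
  classical
  rw [Ideal.mem_colon_span_singleton]
  have hset : {q : MvPolynomial (Fin n) K | ∃ a b : Fin n, a < b ∧ ¬ G.Adj a b ∧
      (a < i ∨ (a = i ∧ b < j)) ∧
      q = monomial (Finsupp.single a 1 + Finsupp.single b 1) 1} =
      (fun d => monomial d (1 : K)) '' {d | ∃ a b : Fin n, a < b ∧ ¬ G.Adj a b ∧
        (a < i ∨ (a = i ∧ b < j)) ∧ d = Finsupp.single a 1 + Finsupp.single b 1} := by
    ext q
    constructor
    · rintro ⟨a, b, h1, h2, h3, rfl⟩
      exact ⟨_, ⟨a, b, h1, h2, h3, rfl⟩, rfl⟩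
    · rintro ⟨d, ⟨a, b, h1, h2, h3, rfl⟩, rfl⟩
      exact ⟨a, b, h1, h2, h3, rfl⟩
  have hmul : (MvPolynomial.X l : MvPolynomial (Fin n) K) *
      monomial (Finsupp.single i 1 + Finsupp.single j 1) (1 : K) =
      monomial (Finsupp.single l 1 + (Finsupp.single i 1 + Finsupp.single j 1)) (1 : K) := by
    rw [MvPolynomial.X, monomial_mul, one_mul]
  rw [hmul, hset, mem_ideal_span_monomial_image]
  have hsupp : (monomial (Finsupp.single l 1 + (Finsupp.single i 1 + Finsupp.single j 1))
      (1 : K)).support = {Finsupp.single l 1 + (Finsupp.single i 1 + Finsupp.single j 1)} := by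
    rw [support_monomial, if_neg one_ne_zero]
  rw [hsupp]
  simp only [Finset.mem_singleton, forall_eq, Set.mem_setOf_eq]
  constructor
  · rintro ⟨si, ⟨a, b, h1, h2, h3, rfl⟩, hle⟩
    exact ⟨a, b, h1, h2, h3, hle⟩
  · rintro ⟨a, b, h1, h2, h3, hle⟩
    exact ⟨_, ⟨a, b, h1, h2, h3, rfl⟩, hle⟩

end Aux

/-- let `1, …, n` be a perfect elimination ordering of `G` and `I = I(G^c)`, with
`G(I)` ordered by the lexicographic order induced by `x_1 > ⋯ > x_n` (an order of linear
quotients). Then the `k`-th homological shift ideal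
`HS_k(I) = ( x_F v : v ∈ G(I), F ⊆ set(v), |F| = k )` equals the ideal generated by all squarefree
monomials `x_{i_1} ⋯ x_{i_{k+2}}`, `i_1 < ⋯ < i_{k+2}`, admitting `t < k+2` with
`{i_t, i_ℓ} ∉ E(G)` for all `t < ℓ ≤ k+2`. -/
theorem stmt_10 {K : Type*} [Field K] {n : ℕ} (G : SimpleGraph (Fin n))
    (peo : ∀ i j k : Fin n, i < j → i < k → G.Adj i j → G.Adj i k → j ≠ k → G.Adj j k)
    (k : ℕ) :
    Ideal.span {p : MvPolynomial (Fin n) K | ∃ i j : Fin n, i < j ∧ ¬ G.Adj i j ∧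
      ∃ F : Finset (Fin n), F.card = k ∧
        (∀ l ∈ F, MvPolynomial.X l ∈
          Submodule.colon
            (Ideal.span {q : MvPolynomial (Fin n) K | ∃ a b : Fin n, a < b ∧ ¬ G.Adj a b ∧
              (a < i ∨ (a = i ∧ b < j)) ∧
              q = monomial (Finsupp.single a 1 + Finsupp.single b 1) 1})
            (Ideal.span {(monomial (Finsupp.single i 1 + Finsupp.single j 1) (1 : K))})) ∧
        p = monomial (Finsupp.single i 1 + Finsupp.single j 1 + ∑ l ∈ F, Finsupp.single l 1) 1}
    =
    Ideal.span {p : MvPolynomial (Fin n) K | ∃ T : Finset (Fin n), T.card = k + 2 ∧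
      (∃ t ∈ T, (∃ l ∈ T, t < l) ∧ ∀ l ∈ T, t < l → ¬ G.Adj t l) ∧
      p = monomial (∑ l ∈ T, Finsupp.single l 1) 1} := by
  apply le_antisymm <;> rw [Ideal.span_le] <;> intro p hp <;>
    apply Ideal.subset_span
  · obtain ⟨i, j, hij, hnadj, F, hFcard, hcolon, rfl⟩ := hp
    -- the colon condition, characterized
    have hchar : ∀ l ∈ F, ∃ a b : Fin n, a < b ∧ ¬ G.Adj a b ∧ (a < i ∨ (a = i ∧ b < j)) ∧
        Finsupp.single a 1 + Finsupp.single b 1 ≤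
          Finsupp.single l 1 + (Finsupp.single i 1 + Finsupp.single j 1) := by
      intro l hl
      exact (colon_char G i j l).mp (hcolon l hl)
    have hiF : i ∉ F := by
      intro hiF
      obtain ⟨a, b, h1, h2, h3, hle⟩ := hchar i hiF
      obtain ⟨ha, hb⟩ := pair_le_three hle
      have ha' : a = i ∨ a = j := by tauto
      have hb' : b = i ∨ b = j := by tauto
      rcases ha' with rfl | rfl <;> rcases hb' with rfl | rfl
      · exact absurd h1 (lt_irrefl _)
      · rcases h3 with h3 | ⟨-, h3⟩ <;> exact absurd h3 (lt_irrefl _)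
      · exact absurd (h1.trans hij) (lt_irrefl _)
      · exact absurd h1 (lt_irrefl _)
    have hjF : j ∉ F := by
      intro hjF
      obtain ⟨a, b, h1, h2, h3, hle⟩ := hchar j hjF
      obtain ⟨ha, hb⟩ := pair_le_three hle
      have ha' : a = j ∨ a = i := by tauto
      have hb' : b = j ∨ b = i := by tauto
      rcases ha' with rfl | rfl <;> rcases hb' with rfl | rfl
      · exact absurd h1 (lt_irrefl _)
      · exact absurd (hij.trans h1) (lt_irrefl _)
      · rcases h3 with h3 | ⟨-, h3⟩ <;> exact absurd h3 (lt_irrefl _)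
      · exact absurd h1 (lt_irrefl _)
    refine ⟨insert i (insert j F), ?_, ⟨i, ?_, ⟨j, ?_, hij⟩, ?_⟩, ?_⟩
    · rw [Finset.card_insert_of_notMem (by simp [hij.ne, hiF]),
        Finset.card_insert_of_notMem hjF, hFcard]
    · simp
    · simp
    · intro l hl hil
      simp only [Finset.mem_insert] at hl
      rcases hl with rfl | rfl | hl
      · exact absurd hil (lt_irrefl _)
      · exact hnadj
      · -- l ∈ F with i < l : show ¬ G.Adj i l
        obtain ⟨a, b, h1, h2, h3, hle⟩ := hchar l hl
        obtain ⟨ha, hb⟩ := pair_le_three hle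
        have hli : l ≠ i := fun he => hiF (he ▸ hl)
        have hlj : l ≠ j := fun he => hjF (he ▸ hl)
        rcases ha with rfl | rfl | rfl <;> rcases hb with rfl | rfl | rfl
        · exact absurd h1 (lt_irrefl _)
        · exact absurd (hil.trans h1) (lt_irrefl _)
        · rcases h3 with h3 | ⟨h3, -⟩
          · exact absurd (hil.trans h3) (lt_irrefl _)
          · exact absurd h3 hli
        · exact h2
        · exact absurd h1 (lt_irrefl _)
        · rcases h3 with h3 | ⟨-, h3⟩ <;> exact absurd h3 (lt_irrefl _)
        · rcases h3 with h3 | ⟨h3, -⟩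
          · exact absurd (hij.trans h3) (lt_irrefl _)
          · exact absurd h3 hij.ne'
        · rcases h3 with h3 | ⟨h3, -⟩
          · exact absurd (hij.trans h3) (lt_irrefl _)
          · exact absurd h3 hij.ne'
        · exact absurd h1 (lt_irrefl _)
    · have hexp : Finsupp.single i 1 + Finsupp.single j 1 + ∑ l ∈ F, Finsupp.single l 1 =
          ∑ l ∈ insert i (insert j F), Finsupp.single l (1 : ℕ) := by
        rw [Finset.sum_insert (by simp [hij.ne, hiF]), Finset.sum_insert hjF, ← add_assoc]
      rw [hexp]
  · obtain ⟨T, hcard, ⟨t, htT, ⟨l0, hl0T, htl0⟩, hprop⟩, rfl⟩ := hp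
    have hTne : T.Nonempty := ⟨t, htT⟩
    set j := T.max' hTne with hj
    have hjT : j ∈ T := T.max'_mem hTne
    have htj : t < j := lt_of_lt_of_le htl0 (T.le_max' l0 hl0T)
    have hnadjtj : ¬ G.Adj t j := hprop j hjT htj
    set F := (T.erase j).erase t with hF
    have htTj : t ∈ T.erase j := Finset.mem_erase.mpr ⟨htj.ne, htT⟩
    have hFcard : F.card = k := by
      rw [hF, Finset.card_erase_of_mem htTj, Finset.card_erase_of_mem hjT, hcard]
      omega
    refine ⟨t, j, htj, hnadjtj, F, hFcard, ?_, ?_⟩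
    · intro l hl
      rw [colon_char]
      have hlt : l ≠ t := (Finset.mem_erase.mp hl).1
      have hlT' : l ∈ T.erase j := (Finset.mem_erase.mp hl).2
      have hlj : l ≠ j := (Finset.mem_erase.mp hlT').1
      have hlT : l ∈ T := (Finset.mem_erase.mp hlT').2
      have hljlt : l < j := lt_of_le_of_ne (T.le_max' l hlT) hlj
      rcases lt_or_gt_of_ne hlt with hlt' | htl'
      · -- l < t
        by_cases hadj : G.Adj l t
        · -- then ¬ Adj l j by peo
          have hnadjlj : ¬ G.Adj l j := by
            intro hadj'
            exact hnadjtj (peo l t j hlt' (hlt'.trans htj) hadj hadj' htj.ne)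
          refine ⟨l, j, hlt'.trans htj, hnadjlj, Or.inl hlt', ?_⟩
          rw [pair_eq hlj, triple_eq hlt hlj htj.ne, eS_le_iff]
          intro x hx
          simp only [Finset.mem_insert, Finset.mem_singleton] at hx ⊢
          tauto
        · refine ⟨l, t, hlt', hadj, Or.inl hlt', ?_⟩
          rw [pair_eq hlt, triple_eq hlt hlj htj.ne, eS_le_iff]
          intro x hx
          simp only [Finset.mem_insert, Finset.mem_singleton] at hx ⊢
          tauto
      · -- t < l
        refine ⟨t, l, htl', hprop l hlT htl', Or.inr ⟨rfl, hljlt⟩, ?_⟩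
        rw [pair_eq hlt.symm, triple_eq hlt hlj htj.ne, eS_le_iff]
        intro x hx
        simp only [Finset.mem_insert, Finset.mem_singleton] at hx ⊢
        tauto
    · have hTeq : T = insert j (insert t F) := by
        rw [hF, Finset.insert_erase htTj, Finset.insert_erase hjT]
      have hjF' : j ∉ F := fun h => Finset.notMem_erase j T (Finset.mem_of_mem_erase h)
      have hjtF : j ∉ insert t F := by simp [htj.ne', hjF']
      have hexp : ∑ l ∈ T, Finsupp.single l (1 : ℕ) =
          Finsupp.single t 1 + Finsupp.single j 1 + ∑ l ∈ F, Finsupp.single l 1 := by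
        rw [hTeq, Finset.sum_insert hjtF, Finset.sum_insert (Finset.notMem_erase t _),
          ← add_assoc, add_comm (Finsupp.single j 1) (Finsupp.single t 1)]
      rw [hexp]
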